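/- For all natural numbers n ≥ m ≥ r, the Stirling numbers of the second kind satisfy the recurrence C(m, r) · S(n, m) = ∑_{k=m-r}^{n-r} C(n, k) · S(n-k, r) · S(k, m-r), where C denotes the binomial coefficient and S(n, m) denotes the Stirling number of the second kind. -/
import Mathlib


/-- Stirling numbers of the second kind. -/
def stirling2 : ℕ → ℕ → ℕ
  | 0, 0 => 1
  | 0, _ + 1 => 0
  | _ + 1, 0 => 0
  | n + 1, m + 1 => (m + 1) * stirling2 n (m + 1) + stirling2 n m

@[simp] lemma stirling2_zero_succ (m : ℕ) : stirling2 0 (m + 1) = 0 := rfl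

lemma stirling2_succ (n m : ℕ) :
    stirling2 (n + 1) (m + 1) = (m + 1) * stirling2 n (m + 1) + stirling2 n m := rfl

lemma stirling2_zero_right {n : ℕ} (h : n ≠ 0) : stirling2 n 0 = 0 := by
  cases n with
  | zero => exact absurd rfl h
  | succ n => rfl

lemma stirling2_eq_zero_of_lt : ∀ {n m : ℕ}, n < m → stirling2 n m = 0
  | 0, m + 1, _ => rfl
  | n + 1, m + 1, h => by
    have hn : n < m := Nat.lt_of_succ_lt_succ h
    rw [stirling2_succ, stirling2_eq_zero_of_lt (hn.trans (Nat.lt_succ_self m)),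
      stirling2_eq_zero_of_lt hn]
    simp

lemma T_eq : ∀ (n r s : ℕ),
    ∑ k ∈ Finset.range (n + 1),
      Nat.choose n k * stirling2 (n - k) r * stirling2 k s
    = Nat.choose (r + s) r * stirling2 n (r + s) := by
  intro n
  induction n with
  | zero =>
    intro r s
    simp only [Nat.zero_add, zero_add, Finset.sum_range_one]
    cases r with
    | zero =>
      cases s with
      | zero => rfl
      | succ s => simp
    | succ r =>
      cases s with
      | zero => simp
      | succ s =>
        have h2 : stirling2 0 (r + 1 + (s + 1)) = 0 := by
          rw [show r + 1 + (s + 1) = (r + s + 1) + 1 from by ring]; simp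
        simp [h2]
  | succ n ih =>
    intro r s
    cases r with
    | zero =>
      rw [Finset.sum_eq_single_of_mem (n + 1) (Finset.self_mem_range_succ _)]
      · simp [stirling2]
      · intro k hk hne
        have hk' : k ≤ n := by have := Finset.mem_range.mp hk; omega
        rw [stirling2_zero_right (by omega : n + 1 - k ≠ 0)]
        ring
    | succ r =>
      cases s with
      | zero =>
        rw [Finset.sum_eq_single_of_mem 0 (Finset.mem_range.mpr (by omega))]
        · simp [stirling2, Nat.choose_self]
        · intro k hk hne
          rw [stirling2_zero_right hne, mul_zero]
      | succ s =>
        -- step 1: drop the k = 0 term and shift index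
        have h1 : ∑ k ∈ Finset.range (n + 1 + 1),
              Nat.choose (n + 1) k * stirling2 (n + 1 - k) (r + 1) * stirling2 k (s + 1)
            = ∑ k ∈ Finset.range (n + 1),
              Nat.choose (n + 1) (k + 1) * stirling2 (n - k) (r + 1) * stirling2 (k + 1) (s + 1) := by
          rw [Finset.sum_range_succ']
          simp [Nat.succ_sub_succ]
        -- step 2: the shifted-binomial sum equals the unshifted one
        have h2 : ∑ k ∈ Finset.range (n + 1),
              Nat.choose n (k + 1) * stirling2 (n - k) (r + 1) * stirling2 (k + 1) (s + 1)
            = ∑ k ∈ Finset.range (n + 1),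
              Nat.choose n k * stirling2 (n + 1 - k) (r + 1) * stirling2 k (s + 1) := by
          have e1 := Finset.sum_range_succ'
            (fun k => Nat.choose n k * stirling2 (n + 1 - k) (r + 1) * stirling2 k (s + 1)) (n + 1)
          have e2 := Finset.sum_range_succ
            (fun k => Nat.choose n k * stirling2 (n + 1 - k) (r + 1) * stirling2 k (s + 1)) (n + 1)
          simp only [stirling2_zero_succ, mul_zero, add_zero,
            Nat.choose_succ_self, zero_mul, Nat.succ_sub_succ] at e1 e2
          rw [← e2, e1]
        -- step 3: expand the unshifted sum using the Stirling recurrence in the first slot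
        have h3 : ∑ k ∈ Finset.range (n + 1),
              Nat.choose n k * stirling2 (n + 1 - k) (r + 1) * stirling2 k (s + 1)
            = (r + 1) * ∑ k ∈ Finset.range (n + 1),
                Nat.choose n k * stirling2 (n - k) (r + 1) * stirling2 k (s + 1)
              + ∑ k ∈ Finset.range (n + 1),
                Nat.choose n k * stirling2 (n - k) r * stirling2 k (s + 1) := by
          rw [Finset.mul_sum, ← Finset.sum_add_distrib]
          refine Finset.sum_congr rfl fun k hk => ?_
          have hk' : k ≤ n := by have := Finset.mem_range.mp hk; omega
          rw [show n + 1 - k = (n - k) + 1 by omega, stirling2_succ]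
          ring
        -- step 4: expand each summand of h1's RHS
        have h4 : ∑ k ∈ Finset.range (n + 1),
              Nat.choose (n + 1) (k + 1) * stirling2 (n - k) (r + 1) * stirling2 (k + 1) (s + 1)
            = ((s + 1) * ∑ k ∈ Finset.range (n + 1),
                  Nat.choose n k * stirling2 (n - k) (r + 1) * stirling2 k (s + 1)
                + ∑ k ∈ Finset.range (n + 1),
                  Nat.choose n k * stirling2 (n - k) (r + 1) * stirling2 k s)
              + ∑ k ∈ Finset.range (n + 1),
                Nat.choose n (k + 1) * stirling2 (n - k) (r + 1) * stirling2 (k + 1) (s + 1) := by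
          rw [Finset.mul_sum, ← Finset.sum_add_distrib, ← Finset.sum_add_distrib]
          refine Finset.sum_congr rfl fun k hk => ?_
          rw [Nat.choose_succ_succ, add_mul, add_mul]
          congr 1
          rw [stirling2_succ k s]
          ring
        rw [h1, h4, h2, h3, ih, ih, ih]
        have e1 : r + 1 + (s + 1) = (r + s + 1) + 1 := by ring
        have e2 : r + 1 + s = r + s + 1 := by ring
        have e3 : r + (s + 1) = r + s + 1 := by ring
        rw [e1, e2, e3, stirling2_succ n (r + s + 1), Nat.choose_succ_succ (r + s + 1) r]
        ring

theorem stirling2_recurrence (n m r : ℕ) (hrm : r ≤ m) (hmn : m ≤ n) :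
    Nat.choose m r * stirling2 n m =
      ∑ k ∈ Finset.Icc (m - r) (n - r),
        Nat.choose n k * stirling2 (n - k) r * stirling2 k (m - r) := by
  have key := T_eq n r (m - r)
  rw [Nat.add_sub_cancel' hrm] at key
  rw [← key]
  symm
  apply Finset.sum_subset
  · intro k hk
    rw [Finset.mem_Icc] at hk
    rw [Finset.mem_range]
    omega
  · intro k hk hk'
    rw [Finset.mem_range] at hk
    rw [Finset.mem_Icc] at hk'
    rcases not_and_or.mp hk' with h | h
    · rw [stirling2_eq_zero_of_lt (by omega : k < m - r), mul_zero]
    · rw [stirling2_eq_zero_of_lt (by omega : n - k < r), mul_zero, zero_mul]
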